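/- For any vertex x of a connected graph G, the set of edges M(x) induces a forest (contains no cycle). -/

import Mathlib

open SimpleGraph

/-- `e` is monitored by vertex `x` in `G`: some vertex `y` has its distance to `x`
changed when `e` is deleted (distances in `ℕ∞`, `⊤` if disconnected). -/
def monitors {V : Type*} (G : SimpleGraph V) (x : V) (e : Sym2 V) : Prop :=
  ∃ y : V, G.edist x y ≠ (G.deleteEdges {e}).edist x y

/-- `M` is a distance-edge-monitoring set of `G`. -/
def IsDEMSet {V : Type*} (G : SimpleGraph V) (M : Set V) : Prop :=
  ∀ e ∈ G.edgeSet, ∃ x ∈ M, monitors G x e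

/-- The smallest size of a distance-edge-monitoring set of `G`. -/
noncomputable def dem (V : Type*) [Fintype V] (G : SimpleGraph V) : ℕ :=
  sInf {k | ∃ M : Finset V, M.card = k ∧ IsDEMSet G ↑M}

/-- The set `P(M, e)` of pairs `(x, y)`, `x ∈ M`, whose distance changes when `e` is deleted. -/
def pairs {V : Type*} (G : SimpleGraph V) (M : Set V) (e : Sym2 V) : Set (V × V) :=
  {p | p.1 ∈ M ∧ G.edist p.1 p.2 ≠ (G.deleteEdges {e}).edist p.1 p.2}

/-- `C` is a vertex cover of `G`. -/
def IsVC {V : Type*} (G : SimpleGraph V) (C : Set V) : Prop :=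
  ∀ e ∈ G.edgeSet, ∃ v ∈ C, v ∈ e

/-- The vertex cover number of `G`. -/
noncomputable def vcNum (V : Type*) [Fintype V] (G : SimpleGraph V) : ℕ :=
  sInf {k | ∃ C : Finset V, C.card = k ∧ IsVC G ↑C}

/-- The feedback edge set number: minimum number of edges whose deletion leaves a forest. -/
noncomputable def fes (V : Type*) [Fintype V] (G : SimpleGraph V) : ℕ :=
  sInf {k | ∃ F : Finset (Sym2 V), F.card = k ∧ (G.deleteEdges ↑F).IsAcyclic}

section Aux
variable {V : Type*} {G : SimpleGraph V}

/-- A vertex at positive distance has a neighbor strictly closer. -/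
lemma exists_adj_of_edist {x y : V} {n : ℕ} (h : G.edist x y = (n + 1 : ℕ)) :
    ∃ z, G.Adj z y ∧ G.edist x z ≤ (n : ℕ∞) := by
  obtain ⟨p, hp⟩ := exists_walk_of_edist_ne_top (by rw [h]; exact ENat.coe_ne_top _)
  have hne : y ≠ x := by
    rintro rfl
    rw [edist_self] at h
    exact (by simpa using h.symm)
  obtain ⟨z, hadj, q, hq⟩ := Walk.exists_eq_cons_of_ne hne p.reverse
  refine ⟨z, hadj.symm, ?_⟩
  have hlen : p.length = n + 1 := by
    have := hp.trans h
    exact_mod_cast this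
  have hql : q.length = n := by
    have : p.reverse.length = n + 1 := by rw [Walk.length_reverse, hlen]
    rw [hq] at this
    simpa using this
  calc G.edist x z ≤ q.reverse.length := edist_le _
    _ = (n : ℕ∞) := by rw [Walk.length_reverse, hql]

/-- Key lemma: under the replacement hypothesis, deleting `e` does not change distances from
`x`. -/
lemma key_le {x : V} {e : Sym2 V}
    (hyp : ∀ a b : V, e = s(a, b) → G.Adj a b → G.edist x a + 1 ≤ G.edist x b →
      ∃ c, G.Adj c b ∧ s(c, b) ≠ e ∧ G.edist x c < G.edist x b) :
    ∀ n : ℕ, ∀ y : V, G.edist x y ≤ (n : ℕ∞) →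
      (G.deleteEdges {e}).edist x y ≤ G.edist x y := by
  intro n
  induction n with
  | zero =>
    intro y hy
    have : G.edist x y = 0 := le_antisymm (by exact_mod_cast hy) zero_le
    have hxy : x = y := edist_eq_zero_iff.mp this
    subst hxy
    simp [SimpleGraph.edist_self]
  | succ n ih =>
    intro y hy
    by_cases hle : G.edist x y ≤ (n : ℕ∞)
    · exact ih y hle
    · have hEq : G.edist x y = ((n + 1 : ℕ) : ℕ∞) := by
        push_cast
        refine le_antisymm (by exact_mod_cast hy) ?_
        exact Order.add_one_le_of_lt (lt_of_not_ge hle)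
      obtain ⟨z, hadj, hz⟩ := exists_adj_of_edist hEq
      have hzy : G.edist x z + 1 ≤ G.edist x y := by
        rw [hEq]
        push_cast
        exact add_le_add_left hz 1
      by_cases hezy : s(z, y) = e
      · -- the deleted edge: use the replacement vertex
        obtain ⟨c, hcadj, hce, hclt⟩ := hyp z y hezy.symm hadj hzy
        have hcn : G.edist x c ≤ (n : ℕ∞) := by
          rw [hEq] at hclt
          exact_mod_cast (ENat.lt_add_one_iff (ENat.coe_ne_top n)).mp (by exact_mod_cast hclt)
        have h1 : (G.deleteEdges {e}).edist x c ≤ G.edist x c := ih c hcn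
        have hadj' : (G.deleteEdges {e}).Adj c y := by
          rw [deleteEdges_adj]
          exact ⟨hcadj, by simpa using hce⟩
        calc (G.deleteEdges {e}).edist x y
            ≤ (G.deleteEdges {e}).edist x c + (G.deleteEdges {e}).edist c y :=
              SimpleGraph.edist_triangle
          _ ≤ G.edist x c + 1 := by
              gcongr
              exact (edist_eq_one_iff_adj.mpr hadj').le
          _ ≤ (n : ℕ∞) + 1 := by gcongr
          _ = G.edist x y := by rw [hEq]; push_cast; ring
      · have h1 : (G.deleteEdges {e}).edist x z ≤ G.edist x z := ih z hz
        have hadj' : (G.deleteEdges {e}).Adj z y := by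
          rw [deleteEdges_adj]
          exact ⟨hadj, by simpa using hezy⟩
        calc (G.deleteEdges {e}).edist x y
            ≤ (G.deleteEdges {e}).edist x z + (G.deleteEdges {e}).edist z y :=
              SimpleGraph.edist_triangle
          _ ≤ G.edist x z + 1 := by
              gcongr
              exact (edist_eq_one_iff_adj.mpr hadj').le
          _ ≤ (n : ℕ∞) + 1 := by gcongr
          _ = G.edist x y := by rw [hEq]; push_cast; ring

lemma not_monitors (hG : G.Connected) {x : V} {e : Sym2 V}
    (hyp : ∀ a b : V, e = s(a, b) → G.Adj a b → G.edist x a + 1 ≤ G.edist x b →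
      ∃ c, G.Adj c b ∧ s(c, b) ≠ e ∧ G.edist x c < G.edist x b) :
    ¬ monitors G x e := by
  rintro ⟨y, hy⟩
  apply hy
  refine le_antisymm (edist_anti (deleteEdges_le _)) ?_
  have hne : G.edist x y ≠ ⊤ := edist_ne_top_iff_reachable.mpr (hG x y)
  obtain ⟨n, hn⟩ := WithTop.ne_top_iff_exists.mp hne
  exact hn ▸ key_le hyp n y hn.ge

lemma econn_edist_ne_top (hG : G.Connected) (x y : V) : G.edist x y ≠ ⊤ :=
  edist_ne_top_iff_reachable.mpr (hG x y)

/-- Lemma A: a monitored edge has endpoints at different distances from `x`. -/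
lemma monitors_edist_ne (hG : G.Connected) {x u v : V} (huv : G.Adj u v)
    (hm : monitors G x s(u, v)) : G.edist x u ≠ G.edist x v := by
  intro hEq
  refine not_monitors hG ?_ hm
  rintro a b hab - hle
  exfalso
  have : G.edist x a = G.edist x b := by
    rcases Sym2.eq_iff.mp hab with ⟨rfl, rfl⟩ | ⟨rfl, rfl⟩
    · exact hEq
    · exact hEq.symm
  rw [this] at hle
  have hb : G.edist x b ≠ ⊤ := econn_edist_ne_top hG x b
  exact absurd hle (by simp [ENat.add_one_le_iff hb])

/-- Lemma B: the lower endpoint of a monitored edge is the unique closest neighbor. -/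
lemma monitors_unique (hG : G.Connected) {x u v u' : V} (huv : G.Adj u v)
    (hm : monitors G x s(u, v)) (hlt : G.edist x u < G.edist x v)
    (hne : u' ≠ u) (hadj : G.Adj u' v) : G.edist x v ≤ G.edist x u' := by
  by_contra hcon
  push_neg at hcon
  refine not_monitors hG ?_ hm
  rintro a b hab - hle
  rcases Sym2.eq_iff.mp hab with ⟨rfl, rfl⟩ | ⟨rfl, rfl⟩
  · refine ⟨u', hadj, ?_, hcon⟩
    intro h
    rcases Sym2.eq_iff.mp h with ⟨h1, -⟩ | ⟨h1, h2⟩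
    · exact hne h1
    · exact hadj.ne h1
  · exfalso
    exact absurd (le_of_add_le_left hle) (not_le.mpr hlt)

end Aux

lemma walk_loop_cases {V : Type*} {G : SimpleGraph V} {u : V} (p : G.Walk u u) (hp : ¬p.Nil) :
    ∃ (b : V) (h : G.Adj u b) (q : G.Walk b u), p = Walk.cons h q := by
  cases p with
  | nil => simp at hp
  | cons h q => exact ⟨_, h, q, rfl⟩

theorem stmt3 {V : Type*} [Fintype V] (G : SimpleGraph V) (hG : G.Connected) (x : V) :
    (SimpleGraph.fromEdgeSet {e | e ∈ G.edgeSet ∧ monitors G x e}).IsAcyclic := by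
  classical
  set S : Set (Sym2 V) := {e | e ∈ G.edgeSet ∧ monitors G x e} with hS
  intro v c hc
  -- pick a vertex of the cycle at maximal distance from x
  have hsne : c.support.toFinset.Nonempty :=
    ⟨v, List.mem_toFinset.mpr (Walk.start_mem_support c)⟩
  obtain ⟨w, hwmem, hwmax⟩ := Finset.exists_max_image _ (fun z => G.edist x z) hsne
  have hw : w ∈ c.support := List.mem_toFinset.mp hwmem
  have hwmax' : ∀ z ∈ c.support, G.edist x z ≤ G.edist x w := fun z hz =>
    hwmax z (List.mem_toFinset.mpr hz)
  have hc' : (c.rotate _ hw).IsCycle := hc.rotate hw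
  obtain ⟨b, h₁, q₁, hq₁⟩ := walk_loop_cases (c.rotate _ hw) hc'.not_nil
  obtain ⟨p, h₂, q₃, hq₂⟩ := Walk.exists_eq_cons_of_ne h₁.ne q₁.reverse
  -- the two edges at w are distinct
  have hnodup : ((c.rotate _ hw).edges).Nodup := hc'.edges_nodup
  rw [hq₁, Walk.edges_cons] at hnodup
  have hnotin : s(w, b) ∉ q₁.edges := (List.nodup_cons.mp hnodup).1
  have hin : s(w, p) ∈ q₁.edges := by
    have : s(w, p) ∈ q₁.reverse.edges := by
      rw [hq₂, Walk.edges_cons]; exact List.mem_cons_self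
    rwa [Walk.edges_reverse, List.mem_reverse] at this
  have hpb : p ≠ b := by
    rintro rfl
    exact hnotin hin
  -- support memberships
  have hmem_of_rot : ∀ z, z ∈ (c.rotate _ hw).support → z ∈ c.support := by
    intro z hz
    rw [Walk.support_eq_cons] at hz
    rcases List.mem_cons.mp hz with rfl | hz
    · exact hw
    · have := (Walk.support_rotate c _ hw).perm.mem_iff.mp hz
      rw [Walk.support_eq_cons c]
      exact List.mem_cons_of_mem _ this
  have hbmem : b ∈ c.support := by
    apply hmem_of_rot
    rw [hq₁, Walk.support_cons]
    exact List.mem_cons_of_mem _ q₁.start_mem_support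
  have hpmem : p ∈ c.support := by
    apply hmem_of_rot
    rw [hq₁, Walk.support_cons]
    apply List.mem_cons_of_mem
    have : p ∈ q₁.reverse.support := by
      rw [hq₂, Walk.support_cons]
      exact List.mem_cons_of_mem _ q₃.start_mem_support
    rwa [Walk.support_reverse, List.mem_reverse] at this
  -- edge facts
  have hb' : s(w, b) ∈ S ∧ w ≠ b := (fromEdgeSet_adj _).mp h₁
  have hp' : s(w, p) ∈ S ∧ w ≠ p := (fromEdgeSet_adj _).mp h₂
  obtain ⟨⟨hbe, hbm⟩, -⟩ := hb'
  obtain ⟨⟨hpe, hpm⟩, -⟩ := hp'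
  have hGwb : G.Adj w b := (G.mem_edgeSet).mp hbe
  have hGwp : G.Adj w p := (G.mem_edgeSet).mp hpe
  -- strict inequalities
  have hblt : G.edist x b < G.edist x w :=
    lt_of_le_of_ne (hwmax' b hbmem) fun h => monitors_edist_ne hG hGwb hbm h.symm
  have hplt : G.edist x p < G.edist x w :=
    lt_of_le_of_ne (hwmax' p hpmem) fun h => monitors_edist_ne hG hGwp hpm h.symm
  -- uniqueness contradiction
  have hbm' : monitors G x s(b, w) := by rwa [Sym2.eq_swap]
  have := monitors_unique hG hGwb.symm hbm' hblt hpb hGwp.symm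
  exact absurd hplt (not_lt.mpr this)
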